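/- Under the GT-SAGA setup, for every k ≥ 0 and all η₁ > 0, η₂ > 0, the following deterministic (pathwise) inequality holds: ⟨Wy^{k+1} − Jy^{k+1}, (W − J)(∇f(x^{k+1}) − ∇f(x^k))⟩ ≤ (λαL + η₁/2 + η₂)·λ²·‖y^{k+1} − Jy^{k+1}‖² + (1/(2η₁))·λ²α²L²n·‖ḡ^k‖² + (1/η₂)·λ²L²·‖x^k − Jx^k‖². -/

import Mathlib

open MeasureTheory ProbabilityTheory Finset Filter
open scoped ENNReal RealInnerProductSpace

noncomputable section

/-- The second largest singular value of a doubly stochastic matrix `w`, realized as the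
operator norm of `w - (1/n) 𝟙ₙ 𝟙ₙᵀ` acting on `EuclideanSpace ℝ (Fin n)`. -/
def secondSV {n : ℕ} (w : Matrix (Fin n) (Fin n) ℝ) : ℝ :=
  ‖LinearMap.toContinuousLinearMap
      (Matrix.toEuclideanLin (w - Matrix.of fun _ _ => (n : ℝ)⁻¹))‖

/-- The average `(1/n) ∑ᵢ vᵢ` of the blocks of a stacked vector `v ∈ ℝ^{np}`. -/
def blockAvg {n p : ℕ} (v : Fin n → EuclideanSpace ℝ (Fin p)) : EuclideanSpace ℝ (Fin p) :=
  (n : ℝ)⁻¹ • ∑ i, v i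

/-- `‖v - J v‖²` for a stacked vector `v ∈ ℝ^{np}`, where `J = ((1/n) 𝟙ₙ 𝟙ₙᵀ) ⊗ Iₚ`. -/
def consSq {n p : ℕ} (v : Fin n → EuclideanSpace ℝ (Fin p)) : ℝ :=
  ∑ i, ‖v i - blockAvg v‖ ^ 2

/-- `(W - J) v`, blockwise, where `W = w ⊗ Iₚ` and `J = ((1/n) 𝟙ₙ 𝟙ₙᵀ) ⊗ Iₚ`. -/
def WJapp {n p : ℕ} (w : Matrix (Fin n) (Fin n) ℝ) (v : Fin n → EuclideanSpace ℝ (Fin p)) :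
    Fin n → EuclideanSpace ℝ (Fin p) :=
  fun i => (∑ r, w i r • v r) - blockAvg v

/-- The local batch function `fᵢ := (1/m) ∑ⱼ f_{i,j}`. -/
def floc {n m p : ℕ} (f : Fin n → Fin m → EuclideanSpace ℝ (Fin p) → ℝ) (i : Fin n) :
    EuclideanSpace ℝ (Fin p) → ℝ :=
  fun u => (m : ℝ)⁻¹ * ∑ j, f i j u

/-- The global function `F := (1/n) ∑ᵢ fᵢ`. -/
def fglob {n m p : ℕ} (f : Fin n → Fin m → EuclideanSpace ℝ (Fin p) → ℝ) :
    EuclideanSpace ℝ (Fin p) → ℝ :=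
  fun u => (n : ℝ)⁻¹ * ∑ i, floc f i u

/-- `F* := inf_x F(x)`. -/
def Fstar {n m p : ℕ} (f : Fin n → Fin m → EuclideanSpace ℝ (Fin p) → ℝ) : ℝ :=
  ⨅ u, fglob f u

/-- `∇f̄(x) := (1/n) ∑ᵢ ∇fᵢ(xᵢ)`. -/
def gradfbar {n m p : ℕ} (f : Fin n → Fin m → EuclideanSpace ℝ (Fin p) → ℝ)
    (v : Fin n → EuclideanSpace ℝ (Fin p)) : EuclideanSpace ℝ (Fin p) :=
  (n : ℝ)⁻¹ • ∑ i, gradient (floc f i) (v i)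

/-- The auxiliary quantity `t := (1/n) ∑ᵢ (1/m) ∑ⱼ ‖x̄ - z_{i,j}‖²`. -/
def tAux {n m p : ℕ} (xbar : EuclideanSpace ℝ (Fin p))
    (z : Fin n → Fin m → EuclideanSpace ℝ (Fin p)) : ℝ :=
  (n : ℝ)⁻¹ * ∑ i, (m : ℝ)⁻¹ * ∑ j, ‖xbar - z i j‖ ^ 2

/-- The filtration `F^k := σ(τᵢᵗ, sᵢᵗ : i ∈ V, t ≤ k-1)`, with `F⁰` trivial. -/
def gtFilt {Ω : Type*} {n m : ℕ} (τ s : Fin n → ℕ → Ω → Fin m) (k : ℕ) :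
    MeasurableSpace Ω :=
  ⨆ (i : Fin n) (t : ℕ) (_ : t < k),
    MeasurableSpace.comap (τ i t) ⊤ ⊔ MeasurableSpace.comap (s i t) ⊤


section GTSagaHelpers

variable {n m p : ℕ}

lemma consSq_nonneg (v : Fin n → EuclideanSpace ℝ (Fin p)) : 0 ≤ consSq v := by
  apply Finset.sum_nonneg; intro i _; positivity

lemma wj_sum_sq_le (hn : 1 ≤ n) (w : Matrix (Fin n) (Fin n) ℝ)
    (hrow : ∀ i, ∑ r, w i r = 1) (v : Fin n → EuclideanSpace ℝ (Fin p)) :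
    ∑ i, ‖WJapp w v i‖ ^ 2 ≤ (secondSV w) ^ 2 * consSq v := by
  set M := LinearMap.toContinuousLinearMap
      (Matrix.toEuclideanLin (w - Matrix.of fun _ _ => (n : ℝ)⁻¹)) with hM
  set u : Fin p → EuclideanSpace ℝ (Fin n) := fun q => WithLp.toLp 2 (fun i => v i q - blockAvg v q) with hu
  have key : ∀ q i, (M (u q)) i = WJapp w v i q := by
    intro q i
    have : (M (u q)) i = ∑ r, (w i r - (n:ℝ)⁻¹) * (v r q - blockAvg v q) := by
      simp [hM, LinearMap.coe_toContinuousLinearMap', Matrix.toEuclideanLin_apply,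
        Matrix.mulVec, dotProduct, Matrix.sub_apply, hu]
      rw [← Finset.sum_sub_distrib]
      exact Finset.sum_congr rfl fun r _ => by ring
    rw [this]
    have hsum : ∑ r, (w i r - (n:ℝ)⁻¹) = 0 := by
      simp [Finset.sum_sub_distrib, hrow i]
      field_simp
      norm_num
    have expand : ∑ r, (w i r - (n:ℝ)⁻¹) * (v r q - blockAvg v q)
        = (∑ r, (w i r * v r q) - (n:ℝ)⁻¹ * ∑ r, v r q)
          - (∑ r, (w i r - (n:ℝ)⁻¹)) * blockAvg v q := by
      rw [Finset.sum_mul, Finset.mul_sum, ← Finset.sum_sub_distrib, ← Finset.sum_sub_distrib]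
      exact Finset.sum_congr rfl fun r _ => by ring
    rw [expand, hsum]
    simp only [zero_mul, sub_zero]
    have h1 : (WJapp w v i) q = ∑ r, w i r * v r q - (n:ℝ)⁻¹ * ∑ r, v r q := by
      simp only [WJapp, blockAvg, PiLp.sub_apply, PiLp.smul_apply, smul_eq_mul]
      rw [WithLp.ofLp_sum, WithLp.ofLp_sum, Finset.sum_apply q Finset.univ fun x => (w i x • v x).ofLp,
        Finset.sum_apply q Finset.univ fun c => (v c).ofLp, Finset.mul_sum]
      simp [smul_eq_mul]
    rw [h1]
  have lhs_eq : ∑ i, ‖WJapp w v i‖ ^ 2 = ∑ q, ‖M (u q)‖ ^ 2 := by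
    have : ∀ i, ‖WJapp w v i‖ ^ 2 = ∑ q, (WJapp w v i q) ^ 2 := by
      intro i
      rw [EuclideanSpace.norm_eq, Real.sq_sqrt (by positivity)]
      simp [Real.norm_eq_abs, sq_abs]
    rw [Finset.sum_congr rfl (fun i _ => this i), Finset.sum_comm]
    apply Finset.sum_congr rfl; intro q _
    rw [EuclideanSpace.norm_eq, Real.sq_sqrt (by positivity)]
    simp [Real.norm_eq_abs, sq_abs, key]
  have rhs_eq : consSq v = ∑ q, ‖u q‖ ^ 2 := by
    unfold consSq
    have : ∀ i, ‖v i - blockAvg v‖ ^ 2 = ∑ q, (v i q - blockAvg v q) ^ 2 := by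
      intro i
      rw [EuclideanSpace.norm_eq, Real.sq_sqrt (by positivity)]
      simp [Real.norm_eq_abs, sq_abs]
    rw [Finset.sum_congr rfl (fun i _ => this i), Finset.sum_comm]
    apply Finset.sum_congr rfl; intro q _
    rw [EuclideanSpace.norm_eq, Real.sq_sqrt (by positivity)]
    simp [Real.norm_eq_abs, sq_abs, hu]
  rw [lhs_eq, rhs_eq, Finset.mul_sum]
  apply Finset.sum_le_sum
  intro q _
  have h := M.le_opNorm (u q)
  calc ‖M (u q)‖ ^ 2 ≤ (‖M‖ * ‖u q‖) ^ 2 := by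
        apply pow_le_pow_left₀ (norm_nonneg _) h
    _ = secondSV w ^ 2 * ‖u q‖ ^ 2 := by rw [mul_pow]; rfl

lemma grad_floc (f : Fin n → Fin m → EuclideanSpace ℝ (Fin p) → ℝ)
    (hdiff : ∀ i j, Differentiable ℝ (f i j)) (i : Fin n) (u : EuclideanSpace ℝ (Fin p)) :
    gradient (floc f i) u = (m : ℝ)⁻¹ • ∑ j, gradient (f i j) u := by
  apply HasGradientAt.gradient
  rw [hasGradientAt_iff_hasFDerivAt]
  have h1 : HasFDerivAt (fun v => ∑ j, f i j v)
      (∑ j, (InnerProductSpace.toDual ℝ _) (gradient (f i j) u)) u := by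
    apply HasFDerivAt.fun_sum
    intro j _
    exact hasGradientAt_iff_hasFDerivAt.mp ((hdiff i j).differentiableAt.hasGradientAt)
  have h2 := h1.const_mul ((m : ℝ)⁻¹)
  show HasFDerivAt (fun v => (m : ℝ)⁻¹ * ∑ j, f i j v) _ u
  simpa [floc, _root_.map_smul, map_sum] using h2

lemma floc_grad_lip (L : ℝ) (hL : 0 < L)
    (f : Fin n → Fin m → EuclideanSpace ℝ (Fin p) → ℝ)
    (hdiff : ∀ i j, Differentiable ℝ (f i j))
    (hlip : ∀ i j, LipschitzWith L.toNNReal (gradient (f i j)))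
    (i : Fin n) (u v : EuclideanSpace ℝ (Fin p)) :
    ‖gradient (floc f i) u - gradient (floc f i) v‖ ≤ L * ‖u - v‖ := by
  rw [grad_floc f hdiff, grad_floc f hdiff, ← smul_sub, ← Finset.sum_sub_distrib]
  have hm : (0:ℝ) ≤ (m : ℝ)⁻¹ := by positivity
  calc ‖(m : ℝ)⁻¹ • ∑ j, (gradient (f i j) u - gradient (f i j) v)‖
      ≤ (m : ℝ)⁻¹ * ∑ j, ‖gradient (f i j) u - gradient (f i j) v‖ := by
        rw [norm_smul, Real.norm_eq_abs, abs_of_nonneg hm]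
        exact mul_le_mul_of_nonneg_left (norm_sum_le _ _) hm
    _ ≤ (m : ℝ)⁻¹ * ∑ _j : Fin m, L * ‖u - v‖ := by
        apply mul_le_mul_of_nonneg_left _ hm
        apply Finset.sum_le_sum
        intro j _
        have := (hlip i j).dist_le_mul u v
        simpa [dist_eq_norm, Real.coe_toNNReal L hL.le] using this
    _ ≤ L * ‖u - v‖ := by
        rw [Finset.sum_const, card_univ, Fintype.card_fin, nsmul_eq_mul]
        rcases Nat.eq_zero_or_pos m with hm0 | hm0
        · subst hm0; simp; positivity
        · rw [← mul_assoc, inv_mul_cancel₀ (by positivity), one_mul]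

lemma pilp_norm (v : Fin n → EuclideanSpace ℝ (Fin p)) :
    ‖(WithLp.equiv 2 (∀ _ : Fin n, EuclideanSpace ℝ (Fin p))).symm v‖
      = Real.sqrt (∑ i, ‖v i‖ ^ 2) := by
  rw [← Real.sqrt_sq (norm_nonneg _), PiLp.norm_sq_eq_of_L2]
  simp [WithLp.equiv_symm_apply, PiLp.toLp_apply]

lemma sum_inner_le (A D : Fin n → EuclideanSpace ℝ (Fin p)) :
    ∑ i, ⟪A i, D i⟫ ≤ Real.sqrt (∑ i, ‖A i‖ ^ 2) * Real.sqrt (∑ i, ‖D i‖ ^ 2) := by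
  have h1 : ∑ i, ⟪A i, D i⟫
      = ⟪(WithLp.equiv 2 (∀ _ : Fin n, EuclideanSpace ℝ (Fin p))).symm A,
         (WithLp.equiv 2 (∀ _ : Fin n, EuclideanSpace ℝ (Fin p))).symm D⟫ := by
    rw [PiLp.inner_apply]; simp [WithLp.equiv_symm_apply, PiLp.toLp_apply]
  rw [h1, ← pilp_norm, ← pilp_norm]
  exact real_inner_le_norm _ _

lemma sqrt_le_of_sq_le {s t : ℝ} (ht : 0 ≤ t) (h : s ≤ t ^ 2) : Real.sqrt s ≤ t := by
  rw [← Real.sqrt_sq ht]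
  exact Real.sqrt_le_sqrt h

lemma consSq_le_sum (hn : 1 ≤ n) (v : Fin n → EuclideanSpace ℝ (Fin p)) :
    consSq v ≤ ∑ i, ‖v i‖ ^ 2 := by
  have hn' : (n : ℝ) ≠ 0 := by
    have : (0:ℝ) < n := by exact_mod_cast hn
    linarith
  have hsum : ∑ i, v i = (n : ℝ) • blockAvg v := by
    rw [blockAvg, smul_smul, mul_inv_cancel₀ hn', one_smul]
  have expand : consSq v = ∑ i, ‖v i‖ ^ 2 - (n : ℝ) * ‖blockAvg v‖ ^ 2 := by
    unfold consSq
    have h1 : ∀ i, ‖v i - blockAvg v‖ ^ 2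
        = ‖v i‖ ^ 2 - 2 * ⟪v i, blockAvg v⟫ + ‖blockAvg v‖ ^ 2 := by
      intro i
      rw [@norm_sub_sq_real]
    rw [Finset.sum_congr rfl fun i _ => h1 i, Finset.sum_add_distrib, Finset.sum_sub_distrib]
    have h2 : ∑ i, 2 * ⟪v i, blockAvg v⟫ = 2 * ((n:ℝ) * ‖blockAvg v‖ ^ 2) := by
      rw [← Finset.mul_sum, ← sum_inner, hsum, real_inner_smul_left,
        real_inner_self_eq_norm_sq]
    rw [h2, Finset.sum_const, card_univ, Fintype.card_fin, nsmul_eq_mul]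
    ring
  rw [expand]
  have : 0 ≤ (n : ℝ) * ‖blockAvg v‖ ^ 2 := by positivity
  linarith

lemma blockAvg_add (a b : Fin n → EuclideanSpace ℝ (Fin p)) :
    blockAvg (fun i => a i + b i) = blockAvg a + blockAvg b := by
  simp [blockAvg, Finset.sum_add_distrib, smul_add]

lemma blockAvg_sub (a b : Fin n → EuclideanSpace ℝ (Fin p)) :
    blockAvg (fun i => a i - b i) = blockAvg a - blockAvg b := by
  simp [blockAvg, Finset.sum_sub_distrib, smul_sub]

lemma blockAvg_mix (w : Matrix (Fin n) (Fin n) ℝ) (hcol : ∀ r, ∑ i, w i r = 1)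
    (v : Fin n → EuclideanSpace ℝ (Fin p)) :
    blockAvg (fun i => ∑ r, w i r • v r) = blockAvg v := by
  unfold blockAvg
  congr 1
  rw [Finset.sum_comm]
  refine Finset.sum_congr rfl fun r _ => ?_
  rw [← Finset.sum_smul, hcol r, one_smul]

lemma gt_tracking {Ω : Type} (w : Matrix (Fin n) (Fin n) ℝ) (hcol : ∀ r, ∑ i, w i r = 1)
    (y g : ℕ → Fin n → Ω → EuclideanSpace ℝ (Fin p))
    (hy0 : ∀ i ω, y 0 i ω = 0)
    (hydef : ∀ k i ω, y (k + 1) i ω =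
      ∑ r, w i r • (y k r ω + g k r ω - (if k = 0 then 0 else g (k - 1) r ω))) :
    ∀ k ω, blockAvg (fun i => y (k + 1) i ω) = blockAvg (fun i => g k i ω) := by
  intro k
  induction k with
  | zero =>
    intro ω
    have h : (fun i => y 1 i ω) = fun i => ∑ r, w i r • (g 0 r ω) := by
      funext i
      rw [hydef 0 i ω]
      simp [hy0]
    rw [h, blockAvg_mix w hcol]
  | succ k ih =>
    intro ω
    have h : (fun i => y (k + 2) i ω)
        = fun i => ∑ r, w i r • ((fun r => y (k + 1) r ω + g (k + 1) r ω - g k r ω) r) := by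
      funext i
      rw [hydef (k + 1) i ω]
      simp
    rw [h, blockAvg_mix w hcol]
    have h2 : blockAvg (fun r => y (k + 1) r ω + g (k + 1) r ω - g k r ω)
        = blockAvg (fun r => y (k + 1) r ω) + blockAvg (fun r => g (k + 1) r ω)
          - blockAvg (fun r => g k r ω) := by
      rw [blockAvg_sub (fun r => y (k + 1) r ω + g (k + 1) r ω) (fun r => g k r ω),
        blockAvg_add]
    rw [h2, ih ω]
    abel

end GTSagaHelpers

set_option maxHeartbeats 2000000

/-- GT-SAGA: pathwise bound on the first cross term in the gradient-tracking analysis. -/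
theorem gtsaga_cross_term_bound_pathwise
    {Ω : Type} [MeasurableSpace Ω] (P : Measure Ω) [IsProbabilityMeasure P]
    {n m p : ℕ} (hn : 1 ≤ n) (hm : 1 ≤ m)
    (L : ℝ) (hL : 0 < L)
    (f : Fin n → Fin m → EuclideanSpace ℝ (Fin p) → ℝ)
    (hdiff : ∀ i j, Differentiable ℝ (f i j))
    (hlip : ∀ i j, LipschitzWith L.toNNReal (gradient (f i j)))
    (hFbdd : BddBelow (Set.range (fglob f)))
    (w : Matrix (Fin n) (Fin n) ℝ)
    (hrow : ∀ i, ∑ r, w i r = 1) (hcol : ∀ r, ∑ i, w i r = 1)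
    (lam : ℝ) (hlam : lam = secondSV w) (hlam0 : 0 ≤ lam) (hlam1 : lam < 1)
    (τ s : Fin n → ℕ → Ω → Fin m)
    (hτmeas : ∀ i k, Measurable (τ i k)) (hsmeas : ∀ i k, Measurable (s i k))
    (hτunif : ∀ i k j, P {ω | τ i k ω = j} = (m : ℝ≥0∞)⁻¹)
    (hsunif : ∀ i k j, P {ω | s i k ω = j} = (m : ℝ≥0∞)⁻¹)
    (hindep : iIndepFun
      (fun (q : Fin n × ℕ × Bool) (ω : Ω) => if q.2.2 then τ q.1 q.2.1 ω else s q.1 q.2.1 ω) P)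
    (α : ℝ) (hα0 : 0 < α)
    (x y g : ℕ → Fin n → Ω → EuclideanSpace ℝ (Fin p))
    (z : ℕ → Fin n → Fin m → Ω → EuclideanSpace ℝ (Fin p))
    (x0 : EuclideanSpace ℝ (Fin p))
    (hx0 : ∀ i ω, x 0 i ω = x0)
    (hz0 : ∀ i j ω, z 0 i j ω = x0)
    (hy0 : ∀ i ω, y 0 i ω = 0)
    (hgdef : ∀ k i ω, g k i ω =
      gradient (f i (τ i k ω)) (x k i ω) - gradient (f i (τ i k ω)) (z k i (τ i k ω) ω)
        + (m : ℝ)⁻¹ • ∑ j, gradient (f i j) (z k i j ω))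
    (hydef : ∀ k i ω, y (k + 1) i ω =
      ∑ r, w i r • (y k r ω + g k r ω - (if k = 0 then 0 else g (k - 1) r ω)))
    (hxdef : ∀ k i ω, x (k + 1) i ω = ∑ r, w i r • (x k r ω - α • y (k + 1) r ω))
    (hzdef : ∀ k i j ω, z (k + 1) i j ω = if j = s i k ω then x k i ω else z k i j ω)
    (hxL2 : ∀ k i, MemLp (x k i) 2 P)
    (hyL2 : ∀ k i, MemLp (y k i) 2 P)
    (hgL2 : ∀ k i, MemLp (g k i) 2 P)
    (hzL2 : ∀ k i j, MemLp (z k i j) 2 P)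
    (k : ℕ) (η₁ η₂ : ℝ) (hη₁ : 0 < η₁) (hη₂ : 0 < η₂) :
    ∀ ω,
      (∑ i, ⟪WJapp w (fun r => y (k + 1) r ω) i,
          WJapp w
            (fun r => gradient (floc f r) (x (k + 1) r ω) - gradient (floc f r) (x k r ω))
            i⟫)
        ≤ (lam * α * L + η₁ / 2 + η₂) * lam ^ 2 * consSq (fun i => y (k + 1) i ω)
          + 1 / (2 * η₁) * (lam ^ 2 * α ^ 2 * L ^ 2 * n) * ‖blockAvg (fun i => g k i ω)‖ ^ 2
          + 1 / η₂ * (lam ^ 2 * L ^ 2) * consSq (fun i => x k i ω) := by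
  intro ω
  have hlam1' : lam ≤ 1 := hlam1.le
  set Y : Fin n → EuclideanSpace ℝ (Fin p) := fun r => y (k + 1) r ω with hYdef
  set X : Fin n → EuclideanSpace ℝ (Fin p) := fun i => x k i ω with hXdef
  set G : Fin n → EuclideanSpace ℝ (Fin p) := fun i => g k i ω with hGdef
  set Δ : Fin n → EuclideanSpace ℝ (Fin p) :=
    fun r => gradient (floc f r) (x (k + 1) r ω) - gradient (floc f r) (x k r ω) with hΔdef
  set X' : Fin n → EuclideanSpace ℝ (Fin p) := fun i => x (k + 1) i ω with hX'def
  set a := Real.sqrt (consSq Y) with hadef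
  set c := Real.sqrt (consSq X) with hcdef
  set gg := ‖blockAvg G‖ with hggdef
  set s := Real.sqrt (n : ℝ) with hsdef
  set d := Real.sqrt (∑ i, ‖X' i - X i‖ ^ 2) with hddef
  have ha0 : 0 ≤ a := Real.sqrt_nonneg _
  have hc0 : 0 ≤ c := Real.sqrt_nonneg _
  have hgg0 : 0 ≤ gg := norm_nonneg _
  have hs0 : 0 ≤ s := Real.sqrt_nonneg _
  have ha2 : a ^ 2 = consSq Y := Real.sq_sqrt (consSq_nonneg Y)
  have hc2 : c ^ 2 = consSq X := Real.sq_sqrt (consSq_nonneg X)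
  have hs2 : s ^ 2 = (n : ℝ) := Real.sq_sqrt (Nat.cast_nonneg n)
  have hd2 : d ^ 2 = ∑ i, ‖X' i - X i‖ ^ 2 :=
    Real.sq_sqrt (Finset.sum_nonneg fun i _ => by positivity)
  have hd0 : 0 ≤ d := Real.sqrt_nonneg _
  -- bound on ‖(W-J)Y‖
  have hA : Real.sqrt (∑ i, ‖WJapp w Y i‖ ^ 2) ≤ lam * a := by
    apply sqrt_le_of_sq_le (mul_nonneg hlam0 ha0)
    rw [mul_pow, ha2, hlam]
    exact wj_sum_sq_le hn w hrow Y
  -- bound on ‖(W-J)Δ‖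
  have hΔi : ∀ i, ‖Δ i‖ ≤ L * ‖X' i - X i‖ := by
    intro i
    exact floc_grad_lip L hL f hdiff hlip i (x (k + 1) i ω) (x k i ω)
  have hD : Real.sqrt (∑ i, ‖WJapp w Δ i‖ ^ 2) ≤ lam * (L * d) := by
    apply sqrt_le_of_sq_le (mul_nonneg hlam0 (mul_nonneg hL.le hd0))
    calc ∑ i, ‖WJapp w Δ i‖ ^ 2 ≤ lam ^ 2 * consSq Δ := by
          rw [hlam]; exact wj_sum_sq_le hn w hrow Δ
      _ ≤ lam ^ 2 * ∑ i, ‖Δ i‖ ^ 2 :=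
          mul_le_mul_of_nonneg_left (consSq_le_sum hn Δ) (sq_nonneg lam)
      _ ≤ lam ^ 2 * ∑ i, (L * ‖X' i - X i‖) ^ 2 := by
          refine mul_le_mul_of_nonneg_left ?_ (sq_nonneg lam)
          exact Finset.sum_le_sum fun i _ => pow_le_pow_left₀ (norm_nonneg _) (hΔi i) 2
      _ = (lam * (L * d)) ^ 2 := by
          simp only [mul_pow, ← Finset.mul_sum, hd2]
  -- decomposition of X' - X
  have hdecomp : ∀ i, X' i - X i
      = WJapp w X i + (blockAvg X - X i) + ((-α) • WJapp w Y i + (-α) • blockAvg Y) := by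
    intro i
    show x (k + 1) i ω - x k i ω = _
    rw [hxdef k i ω]
    have hsplit : ∑ r, w i r • (x k r ω - α • y (k + 1) r ω)
        = (∑ r, w i r • X r) - α • ∑ r, w i r • Y r := by
      rw [Finset.smul_sum, ← Finset.sum_sub_distrib]
      exact Finset.sum_congr rfl fun r _ => by rw [smul_sub, smul_comm]
    rw [hsplit]
    unfold WJapp
    module
  -- bound on d
  have hd : d ≤ 2 * c + α * (lam * a) + α * (s * gg) := by
    have e1 : d = ‖(WithLp.equiv 2 (∀ _ : Fin n, EuclideanSpace ℝ (Fin p))).symm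
        (fun i => X' i - X i)‖ := (pilp_norm _).symm
    have e2 : (WithLp.equiv 2 (∀ _ : Fin n, EuclideanSpace ℝ (Fin p))).symm
          (fun i => X' i - X i)
        = (WithLp.equiv 2 (∀ _ : Fin n, EuclideanSpace ℝ (Fin p))).symm (WJapp w X)
          + (WithLp.equiv 2 (∀ _ : Fin n, EuclideanSpace ℝ (Fin p))).symm
              (fun i => blockAvg X - X i)
          + ((-α) • (WithLp.equiv 2 (∀ _ : Fin n, EuclideanSpace ℝ (Fin p))).symm (WJapp w Y)
            + (-α) • (WithLp.equiv 2 (∀ _ : Fin n, EuclideanSpace ℝ (Fin p))).symm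
                (fun _ => blockAvg Y)) := by
      ext i : 1
      exact hdecomp i
    have t1 : ‖(WithLp.equiv 2 (∀ _ : Fin n, EuclideanSpace ℝ (Fin p))).symm (WJapp w X)‖
        ≤ lam * c := by
      rw [pilp_norm]
      apply sqrt_le_of_sq_le (mul_nonneg hlam0 hc0)
      rw [mul_pow, hc2, hlam]
      exact wj_sum_sq_le hn w hrow X
    have t2 : ‖(WithLp.equiv 2 (∀ _ : Fin n, EuclideanSpace ℝ (Fin p))).symm
        (fun i => blockAvg X - X i)‖ = c := by
      rw [pilp_norm, hcdef]
      congr 1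
      unfold consSq
      exact Finset.sum_congr rfl fun i _ => by rw [norm_sub_rev]
    have t3 : ‖(WithLp.equiv 2 (∀ _ : Fin n, EuclideanSpace ℝ (Fin p))).symm (WJapp w Y)‖
        ≤ lam * a := by
      rw [pilp_norm]; exact hA
    have t4 : ‖(WithLp.equiv 2 (∀ _ : Fin n, EuclideanSpace ℝ (Fin p))).symm
        (fun _ : Fin n => blockAvg Y)‖ = s * gg := by
      rw [pilp_norm]
      have hyg : blockAvg Y = blockAvg G :=
        gt_tracking w hcol y g hy0 hydef k ω
      rw [Finset.sum_const, card_univ, Fintype.card_fin, nsmul_eq_mul, hyg,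
        Real.sqrt_mul (Nat.cast_nonneg n), Real.sqrt_sq hgg0, hsdef, hggdef]
    have tri : d ≤ lam * c + c + (α * (lam * a) + α * (s * gg)) := by
      rw [e1, e2]
      calc _ ≤ ‖(WithLp.equiv 2 (∀ _ : Fin n, EuclideanSpace ℝ (Fin p))).symm (WJapp w X)
            + (WithLp.equiv 2 (∀ _ : Fin n, EuclideanSpace ℝ (Fin p))).symm
                (fun i => blockAvg X - X i)‖
          + ‖(-α) • (WithLp.equiv 2 (∀ _ : Fin n, EuclideanSpace ℝ (Fin p))).symm (WJapp w Y)
            + (-α) • (WithLp.equiv 2 (∀ _ : Fin n, EuclideanSpace ℝ (Fin p))).symm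
                (fun _ => blockAvg Y)‖ := norm_add_le _ _
        _ ≤ _ := by
          have n1 := norm_add_le
            ((WithLp.equiv 2 (∀ _ : Fin n, EuclideanSpace ℝ (Fin p))).symm (WJapp w X))
            ((WithLp.equiv 2 (∀ _ : Fin n, EuclideanSpace ℝ (Fin p))).symm
              (fun i => blockAvg X - X i))
          have n2 := norm_add_le
            ((-α) • (WithLp.equiv 2 (∀ _ : Fin n, EuclideanSpace ℝ (Fin p))).symm (WJapp w Y))
            ((-α) • (WithLp.equiv 2 (∀ _ : Fin n, EuclideanSpace ℝ (Fin p))).symm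
              (fun _ => blockAvg Y))
          rw [norm_smul, norm_smul, Real.norm_eq_abs, abs_neg, abs_of_pos hα0] at n2
          have b3 : α * ‖(WithLp.equiv 2 (∀ _ : Fin n, EuclideanSpace ℝ (Fin p))).symm
              (WJapp w Y)‖ ≤ α * (lam * a) :=
            mul_le_mul_of_nonneg_left t3 hα0.le
          have b4 : α * ‖(WithLp.equiv 2 (∀ _ : Fin n, EuclideanSpace ℝ (Fin p))).symm
              (fun _ : Fin n => blockAvg Y)‖ = α * (s * gg) := by rw [t4]
          linarith [t1, t2.le, t2.ge]
    have hlc : lam * c ≤ c := by nlinarith [mul_nonneg (sub_nonneg.mpr hlam1') hc0]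
    linarith
  -- put everything together
  have main : (∑ i, ⟪WJapp w Y i, WJapp w Δ i⟫)
      ≤ (lam * a) * (lam * (L * (2 * c + α * (lam * a) + α * (s * gg)))) := by
    calc ∑ i, ⟪WJapp w Y i, WJapp w Δ i⟫
        ≤ Real.sqrt (∑ i, ‖WJapp w Y i‖ ^ 2) * Real.sqrt (∑ i, ‖WJapp w Δ i‖ ^ 2) :=
          sum_inner_le _ _
      _ ≤ (lam * a) * (lam * (L * d)) :=
          mul_le_mul hA hD (Real.sqrt_nonneg _) (mul_nonneg hlam0 ha0)
      _ ≤ (lam * a) * (lam * (L * (2 * c + α * (lam * a) + α * (s * gg)))) := by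
          refine mul_le_mul_of_nonneg_left ?_ (mul_nonneg hlam0 ha0)
          exact mul_le_mul_of_nonneg_left
            (mul_le_mul_of_nonneg_left hd hL.le) hlam0
  refine le_trans main ?_
  rw [← ha2, ← hc2, ← hs2]
  have hy1 : 2 * (L * a * c) ≤ η₂ * a ^ 2 + 1 / η₂ * (L ^ 2 * c ^ 2) := by
    have key : η₂ * a ^ 2 + 1 / η₂ * (L ^ 2 * c ^ 2) - 2 * (L * a * c)
        = (η₂ * a - L * c) ^ 2 / η₂ := by
      field_simp
      ring
    nlinarith [div_nonneg (sq_nonneg (η₂ * a - L * c)) hη₂.le]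
  have hy2 : α * L * (s * gg) * a
      ≤ η₁ / 2 * a ^ 2 + 1 / (2 * η₁) * (α ^ 2 * L ^ 2 * s ^ 2 * gg ^ 2) := by
    have key : η₁ / 2 * a ^ 2 + 1 / (2 * η₁) * (α ^ 2 * L ^ 2 * s ^ 2 * gg ^ 2)
        - α * L * (s * gg) * a = (η₁ * a - α * L * (s * gg)) ^ 2 / (2 * η₁) := by
      field_simp
      ring
    nlinarith [div_nonneg (sq_nonneg (η₁ * a - α * L * (s * gg))) (by linarith : (0:ℝ) ≤ 2 * η₁)]
  nlinarith [mul_le_mul_of_nonneg_left hy1 (sq_nonneg lam),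
    mul_le_mul_of_nonneg_left hy2 (sq_nonneg lam)]

end
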